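/- arXiv:1803.08193 — 4 statements merged into one kernel-verified Lean document; each statement's English description precedes it below -/
import Mathlib

section
/- Let X be a topological space and f, g : X → X functions. If f is an open map, then for every subset A ⊆ X, cl(f⁻¹(cl(g⁻¹(A)))) = cl(f⁻¹(g⁻¹(A))) = cl((g ∘ f)⁻¹(A)). (Sequencing lemma: the PDL sequencing axiom ⟨π₁;π₂⟩φ ↔ ⟨π₁⟩⟨π₂⟩φ is valid when f_{π₁} is open.) -/
theorem stmt_2 {X : Type*} [TopologicalSpace X] (f g : X → X) (hf : IsOpenMap f)
    (A : Set X) :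
    closure (f ⁻¹' closure (g ⁻¹' A)) = closure (f ⁻¹' (g ⁻¹' A)) ∧
    closure (f ⁻¹' (g ⁻¹' A)) = closure ((g ∘ f) ⁻¹' A) := by
  refine ⟨le_antisymm ?_ (closure_mono (Set.preimage_mono subset_closure)), rfl⟩
  have h := hf.preimage_closure_subset_closure_preimage (s := g ⁻¹' A)
  calc closure (f ⁻¹' closure (g ⁻¹' A)) ⊆ closure (closure (f ⁻¹' (g ⁻¹' A))) :=
        closure_mono h
    _ = closure (f ⁻¹' (g ⁻¹' A)) := closure_closure
end

section
/- Let (X, (R_π)_{π ∈ Π}) be a serial relational frame (each R_π is a serial relation on X) with valuation v. Define the set X̃ of networks α : Π* → X (maps from finite sequences over Π to X satisfying α(s) R_π α(s ++ [π]) for all sequences s and all π), topologize X̃ by the partition into sets U_x = {α : α(ε) = x}, and define f_π : X̃ → X̃ by f_π(α)(s) = α(π :: s). Then for every PDL formula φ and every network α, α satisfies φ in the dynamic topological model (with ⟨π⟩ interpreted as x ∈ cl(f_π⁻¹(⟦φ⟧))) if and only if α(ε) satisfies φ in the relational model (with the standard existential interpretation of ⟨π⟩). -/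
open TopologicalSpace

/-- PDL formulas over atoms `P` and program labels `Pr`. -/
inductive PDLForm (P Pr : Type*) where
  | atom : P → PDLForm P Pr
  | neg : PDLForm P Pr → PDLForm P Pr
  | and : PDLForm P Pr → PDLForm P Pr → PDLForm P Pr
  | dia : Pr → PDLForm P Pr → PDLForm P Pr

/-- Standard relational (PDL) semantics. -/
def relSat {P Pr X : Type*} (R : Pr → X → X → Prop) (v : P → Set X) :
    X → PDLForm P Pr → Prop
  | x, .atom p => x ∈ v p
  | x, .neg φ => ¬ relSat R v x φ
  | x, .and φ ψ => relSat R v x φ ∧ relSat R v x ψ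
  | x, .dia π φ => ∃ y, R π x y ∧ relSat R v y φ

/-- Topological semantics: `⟨π⟩φ` holds at `x` iff `x ∈ cl(f_π⁻¹⟦φ⟧)`. -/
def topSat {P Pr Y : Type*} (t : TopologicalSpace Y) (f : Pr → Y → Y) (v : P → Set Y) :
    PDLForm P Pr → Set Y
  | .atom p => v p
  | .neg φ => (topSat t f v φ)ᶜ
  | .and φ ψ => topSat t f v φ ∩ topSat t f v ψ
  | .dia π φ => @closure Y t (f π ⁻¹' topSat t f v φ)

/-- Networks through a relational frame. -/
def Network {Pr X : Type*} (R : Pr → X → X → Prop) : Type _ :=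
  {α : List Pr → X // ∀ (s : List Pr) (π : Pr), R π (α s) (α (s ++ [π]))}

/-- The partition topology on networks, generated by the sets `U_x = {α | α ε = x}`. -/
def netTop {Pr X : Type*} (R : Pr → X → X → Prop) : TopologicalSpace (Network R) :=
  generateFrom {U | ∃ x : X, U = {α : Network R | α.1 [] = x}}

/-- The dynamics on networks: `f_π(α)(s) = α(π :: s)`. -/
def netF {Pr X : Type*} (R : Pr → X → X → Prop) (π : Pr) (α : Network R) : Network R :=
  ⟨fun s => α.1 (π :: s), fun s π' => α.2 (π :: s) π'⟩

noncomputable def nxt {Pr X : Type*} {R : Pr → X → X → Prop}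
    (hser : ∀ (π : Pr) (x : X), ∃ y, R π x y) (π : Pr) (x : X) : X :=
  (hser π x).choose

lemma nxt_spec {Pr X : Type*} {R : Pr → X → X → Prop}
    (hser : ∀ (π : Pr) (x : X), ∃ y, R π x y) (π : Pr) (x : X) :
    R π x (nxt hser π x) := (hser π x).choose_spec

noncomputable def ext {Pr X : Type*} {R : Pr → X → X → Prop}
    (hser : ∀ (π : Pr) (x : X), ∃ y, R π x y) : X → List Pr → X
  | x, [] => x
  | x, σ :: s => ext hser (nxt hser σ x) s

lemma ext_step {Pr X : Type*} {R : Pr → X → X → Prop}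
    (hser : ∀ (π : Pr) (x : X), ∃ y, R π x y) :
    ∀ (s : List Pr) (x : X) (π : Pr), R π (ext hser x s) (ext hser x (s ++ [π]))
  | [], x, π => nxt_spec hser π x
  | σ :: s, x, π => ext_step hser s (nxt hser σ x) π

open Classical in
noncomputable def patch {Pr X : Type*} {R : Pr → X → X → Prop}
    (hser : ∀ (π : Pr) (x : X), ∃ y, R π x y) (x y : X) (π : Pr) : List Pr → X
  | [] => x
  | σ :: s => if σ = π then ext hser y s else ext hser (nxt hser σ x) s

lemma patch_step {Pr X : Type*} {R : Pr → X → X → Prop}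
    (hser : ∀ (π : Pr) (x : X), ∃ y, R π x y) {x y : X} {π : Pr} (h : R π x y) :
    ∀ (s : List Pr) (σ : Pr),
      R σ (patch hser x y π s) (patch hser x y π (s ++ [σ])) := by
  intro s σ
  cases s with
  | nil =>
    show R σ x (patch hser x y π [σ])
    by_cases hσ : σ = π
    · subst hσ; simp [patch, ext]; exact h
    · simp [patch, hσ, ext]; exact nxt_spec hser σ x
  | cons τ s =>
    show R σ (patch hser x y π (τ :: s)) (patch hser x y π (τ :: (s ++ [σ])))
    by_cases hτ : τ = π
    · simp only [patch, hτ, if_pos rfl]; exact ext_step hser s y σ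
    · simp only [patch, if_neg hτ]; exact ext_step hser s _ σ

lemma open_root {Pr X : Type*} {R : Pr → X → X → Prop} {U : Set (Network R)}
    (hU : (netTop R).IsOpen U) {α β : Network R} (hβ : β.1 [] = α.1 []) (hα : α ∈ U) :
    β ∈ U := by
  have hU' : GenerateOpen {U | ∃ x : X, U = {α : Network R | α.1 [] = x}} U := hU
  clear hU
  revert hα
  induction hU' with
  | basic V hV =>
    intro hα
    obtain ⟨x, rfl⟩ := hV
    show β.1 [] = x
    rw [hβ]; exact hα
  | univ => intro _; trivial
  | inter V W _ _ ihV ihW => intro hα; exact ⟨ihV hα.1, ihW hα.2⟩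
  | sUnion S _ ih =>
    rintro ⟨V, hV, hαV⟩
    exact ⟨V, hV, ih V hV hαV⟩

lemma mem_closure_net {Pr X : Type*} {R : Pr → X → X → Prop} (S : Set (Network R))
    (α : Network R) :
    α ∈ @closure _ (netTop R) S ↔ ∃ β ∈ S, β.1 [] = α.1 [] := by
  letI : TopologicalSpace (Network R) := netTop R
  rw [mem_closure_iff]
  constructor
  · intro h
    obtain ⟨β, hβU, hβS⟩ :=
      h {γ | γ.1 [] = α.1 []} (GenerateOpen.basic _ ⟨_, rfl⟩) rfl
    exact ⟨β, hβS, hβU⟩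
  · rintro ⟨β, hβS, hβ⟩ U hU hα
    exact ⟨β, open_root hU hβ hα, hβS⟩

theorem stmt_10 {P Pr X : Type*} (R : Pr → X → X → Prop)
    (hser : ∀ (π : Pr) (x : X), ∃ y, R π x y) (v : P → Set X)
    (φ : PDLForm P Pr) (α : Network R) :
    α ∈ topSat (netTop R) (netF R) (fun p => {β : Network R | β.1 [] ∈ v p}) φ ↔
      relSat R v (α.1 []) φ := by
  induction φ generalizing α with
  | atom p => exact Iff.rfl
  | neg φ ih =>
    show α ∉ topSat _ _ _ φ ↔ ¬ relSat R v (α.1 []) φ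
    exact not_congr (ih α)
  | and φ ψ ih1 ih2 =>
    show (_ ∧ _) ↔ (_ ∧ _)
    exact and_congr (ih1 α) (ih2 α)
  | dia π φ ih =>
    show α ∈ @closure _ (netTop R) (netF R π ⁻¹' topSat _ _ _ φ) ↔ _
    rw [mem_closure_net]
    constructor
    · rintro ⟨β, hβ, hroot⟩
      refine ⟨β.1 [π], ?_, ?_⟩
      · rw [← hroot]; exact β.2 [] π
      · exact (ih (netF R π β)).1 hβ
    · rintro ⟨y, hR, hy⟩
      refine ⟨⟨patch hser (α.1 []) y π, patch_step hser hR⟩, ?_, rfl⟩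
      show netF R π _ ∈ topSat _ _ _ φ
      apply (ih _).2
      show relSat R v (patch hser (α.1 []) y π [π]) φ
      simpa [patch, ext] using hy
end

section
/- In the network model construction: let (X, (R_π)) be a serial relational frame, X̃ the set of networks through it with the partition topology generated by the sets U_x = {α : α(ε) = x}, and f_π(α)(s) = α(π :: s). Then each f_π is an open map; specifically, f_π(U_x) = ⋃_{y ∈ R_π(x)} U_y, which is open. -/
open TopologicalSpace

section aux
variable {Pr X : Type*} (R : Pr → X → X → Prop) (hser : ∀ (π : Pr) (x : X), ∃ y, R π x y)

noncomputable def chainAux (x : X) : List Pr → X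
  | [] => x
  | π :: r => (hser π (chainAux x r)).choose

noncomputable def chain (x : X) (s : List Pr) : X := chainAux R hser x s.reverse

lemma chain_nil (x : X) : chain R hser x [] = x := rfl

lemma chain_step (x : X) (s : List Pr) (π : Pr) :
    R π (chain R hser x s) (chain R hser x (s ++ [π])) := by
  unfold chain
  rw [List.reverse_append]
  exact (hser π (chainAux R hser x s.reverse)).choose_spec

noncomputable def baseNet (x : X) : Network R := ⟨chain R hser x, chain_step R hser x⟩

lemma basis : IsTopologicalBasis (t := netTop R)
    {U | ∃ x : X, U = {α : Network R | α.1 [] = x}} := by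
  letI := netTop R
  refine isTopologicalBasis_of_isOpen_of_nhds ?_ ?_
  · rintro U ⟨x, rfl⟩
    exact isOpen_generateFrom_of_mem ⟨x, rfl⟩
  · intro α U hα hU
    induction hU with
    | basic V hV => exact ⟨V, hV, hα, subset_rfl⟩
    | univ => exact ⟨{β : Network R | β.1 [] = α.1 []}, ⟨_, rfl⟩, rfl, Set.subset_univ _⟩
    | inter V W hV hW ihV ihW =>
      obtain ⟨V', hV', hαV', hV'V⟩ := ihV hα.1
      obtain ⟨W', hW', hαW', hW'W⟩ := ihW hα.2
      obtain ⟨v, rfl⟩ := hV'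
      obtain ⟨w, rfl⟩ := hW'
      have : v = w := by rw [← hαV', ← hαW']
      subst this
      exact ⟨_, ⟨v, rfl⟩, hαV', fun β hβ => ⟨hV'V hβ, hW'W hβ⟩⟩
    | sUnion S hS ih =>
      obtain ⟨V, hVS, hαV⟩ := hα
      obtain ⟨V', hV', hαV', h⟩ := ih V hVS hαV
      exact ⟨V', hV', hαV', h.trans (Set.subset_sUnion_of_mem hVS)⟩

end aux

section aux2
variable {Pr X : Type*} (R : Pr → X → X → Prop) (hser : ∀ (π : Pr) (x : X), ∃ y, R π x y)

open Classical in
noncomputable def extFun (π : Pr) (x : X) (α : Network R) : List Pr → X :=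
  fun t => match t with
  | [] => x
  | π' :: s => if π' = π then α.1 s else chain R hser (hser π' x).choose s

lemma extFun_net (π : Pr) (x : X) (α : Network R) (hα : R π x (α.1 [])) :
    ∀ (s : List Pr) (π' : Pr),
      R π' (extFun R hser π x α s) (extFun R hser π x α (s ++ [π'])) := by
  classical
  intro s π'
  cases s with
  | nil =>
    show R π' x (extFun R hser π x α [π'])
    by_cases h : π' = π
    · subst h
      simpa [extFun] using hα
    · simpa [extFun, h, chain_nil] using (hser π' x).choose_spec
  | cons a s' =>
    show R π' (extFun R hser π x α (a :: s')) (extFun R hser π x α (a :: (s' ++ [π'])))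
    by_cases h : a = π
    · simpa [extFun, h] using α.2 s' π'
    · simpa [extFun, h] using chain_step R hser (hser a x).choose s' π'

end aux2

theorem stmt_11 {Pr X : Type*} (R : Pr → X → X → Prop)
    (hser : ∀ (π : Pr) (x : X), ∃ y, R π x y) (π : Pr) :
    (@IsOpenMap (Network R) (Network R) (netTop R) (netTop R) (netF R π)) ∧
    ∀ x : X,
      netF R π '' {α : Network R | α.1 [] = x} =
        ⋃ y ∈ {y : X | R π x y}, {α : Network R | α.1 [] = y} ∧
      @IsOpen (Network R) (netTop R) (netF R π '' {α : Network R | α.1 [] = x}) := by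
  classical
  letI := netTop R
  have key : ∀ x : X, netF R π '' {α : Network R | α.1 [] = x} =
      ⋃ y ∈ {y : X | R π x y}, {α : Network R | α.1 [] = y} := by
    intro x
    ext α
    simp only [Set.mem_image, Set.mem_iUnion, Set.mem_setOf_eq, exists_prop]
    constructor
    · rintro ⟨β, hβ, rfl⟩
      exact ⟨β.1 [π], by simpa [hβ] using β.2 [] π, rfl⟩
    · rintro ⟨y, hxy, hα⟩
      have hα' : R π x (α.1 []) := by rwa [hα]
      refine ⟨⟨extFun R hser π x α, extFun_net R hser π x α hα'⟩, rfl, ?_⟩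
      apply Subtype.ext
      funext s
      show extFun R hser π x α (π :: s) = α.1 s
      simp [extFun]
  have keyOpen : ∀ x : X,
      @IsOpen (Network R) (netTop R) (netF R π '' {α : Network R | α.1 [] = x}) := by
    intro x
    rw [key x]
    exact isOpen_biUnion fun y _ => isOpen_generateFrom_of_mem ⟨y, rfl⟩
  refine ⟨?_, fun x => ⟨key x, keyOpen x⟩⟩
  intro U hU
  rw [(basis R).open_eq_sUnion' hU]
  rw [Set.sUnion_eq_biUnion, Set.image_iUnion₂]
  apply isOpen_biUnion
  rintro V ⟨⟨y, rfl⟩, -⟩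
  exact keyOpen y
end

section
/- If every relation R_π in a serial relational frame is serial, then in the associated network model every f_π is a total function, and moreover for every x ∈ X there exists at least one network α with α(ε) = x (i.e., each U_x is nonempty). -/
open TopologicalSpace

theorem stmt_12 {Pr X : Type*} (R : Pr → X → X → Prop)
    (hser : ∀ (π : Pr) (x : X), ∃ y, R π x y) :
    (∀ (π : Pr) (α : Network R), ∃ β : Network R, netF R π α = β) ∧
    ∀ x : X, ∃ α : Network R, α.1 [] = x := by
  refine ⟨fun π α => ⟨netF R π α, rfl⟩, fun x => ?_⟩
  classical
  refine ⟨⟨fun s => s.foldl (fun y π => Classical.choose (hser π y)) x, ?_⟩, rfl⟩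
  intro s π
  simp only [List.foldl_append, List.foldl_cons, List.foldl_nil]
  exact Classical.choose_spec (hser π _)
end
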